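/- Let φ be a continuous flow without singular points on a compact metric space X. Then φ is positive expansive if and only if for every ε > 0 there is δ > 0 such that for all x, y ∈ X, if the set T_δ(x,y) is unbounded then y = φ_s x for some s with |s| ≤ ε. -/

import Mathlib

open Metric Set
open Filter Topology

/-- A continuous flow on `X`. -/
def IsFlow {X : Type*} [TopologicalSpace X] (φ : ℝ → X → X) : Prop :=
  Continuous (fun p : ℝ × X => φ p.1 p.2) ∧
  (∀ x, φ 0 x = x) ∧
  (∀ s t x, φ (s + t) x = φ s (φ t x))

/-- A singular point of the flow (an equilibrium). -/
def IsSingular {X : Type*} (φ : ℝ → X → X) (x : X) : Prop := ∀ t : ℝ, φ t x = x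

/-- A reparameterization: an increasing homeomorphism of `ℝ` fixing `0`. -/
def Reparam (h : ℝ → ℝ) : Prop :=
  StrictMono h ∧ Continuous h ∧ Function.Surjective h ∧ h 0 = 0

/-- A reparameterization with rests: continuous, surjective, non-decreasing, fixing `0`. -/
def ReparamRest (h : ℝ → ℝ) : Prop :=
  Monotone h ∧ Continuous h ∧ Function.Surjective h ∧ h 0 = 0

/-- Positive expansiveness in the sense of Bowen–Walters. -/
def PosExpansive {X : Type*} [MetricSpace X] (φ : ℝ → X → X) : Prop :=
  ∀ ε > (0 : ℝ), ∃ δ > (0 : ℝ), ∀ x y : X, ∀ h : ℝ → ℝ, Reparam h →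
    (∀ t ≥ (0 : ℝ), dist (φ (h t) x) (φ t y) < δ) →
    ∃ s : ℝ, |s| ≤ ε ∧ y = φ s x

/-- The orbit of a point under the flow. -/
def flowOrbit {X : Type*} (φ : ℝ → X → X) (x : X) : Set X := Set.range fun t => φ t x

/-- The set `T_ε(x,y)` of pairs of nonnegative times reachable by a pair of
reparameterizations with rests keeping the trajectories `ε`-close. -/
def Tset {X : Type*} [MetricSpace X] (φ : ℝ → X → X) (ε : ℝ) (x y : X) : Set (ℝ × ℝ) :=
  { p | 0 ≤ p.1 ∧ 0 ≤ p.2 ∧ ∃ (h₁ h₂ : ℝ → ℝ) (s : ℝ),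
      ReparamRest h₁ ∧ ReparamRest h₂ ∧ 0 < s ∧
      (∀ t ∈ Set.Icc (0 : ℝ) s, dist (φ (h₁ t) x) (φ (h₂ t) y) ≤ ε) ∧
      h₁ s = p.1 ∧ h₂ s = p.2 }

section Aux
variable {X : Type*} [MetricSpace X] [CompactSpace X] {φ : ℝ → X → X}

/-- Uniform smallness of movement in small time. -/
lemma flow_move (hφ : IsFlow φ) {c : ℝ} (hc : 0 < c) :
    ∃ η > (0:ℝ), ∀ (z : X) (v : ℝ), |v| ≤ η → dist (φ v z) z < c := by
  have hcont : Continuous fun p : ℝ × X => dist (φ p.1 p.2) p.2 :=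
    (hφ.1.dist continuous_snd)
  have hopen : IsOpen {p : ℝ × X | dist (φ p.1 p.2) p.2 < c} :=
    isOpen_lt hcont continuous_const
  have hsub : ({0} : Set ℝ) ×ˢ (univ : Set X) ⊆ {p : ℝ × X | dist (φ p.1 p.2) p.2 < c} := by
    rintro ⟨v, z⟩ ⟨hv, -⟩
    simp only [mem_singleton_iff] at hv
    simp [hv, hφ.2.1, hc]
  obtain ⟨u, w, hu, -, h0u, huniv, huw⟩ :=
    generalized_tube_lemma isCompact_singleton isCompact_univ hopen hsub
  obtain ⟨η, hη, hball⟩ := Metric.isOpen_iff.1 hu 0 (h0u rfl)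
  refine ⟨η / 2, by linarith, fun z v hv => ?_⟩
  have : (v, z) ∈ u ×ˢ w := by
    constructor
    · apply hball
      simp only [mem_ball, Real.dist_eq, sub_zero]
      calc |v| ≤ η / 2 := hv
        _ < η := by linarith
    · exact huniv (mem_univ z)
  exact huw this

/-- Uniform non-singularity. -/
lemma flow_nonsing (hφ : IsFlow φ) (hns : ∀ x : X, ¬ IsSingular φ x) :
    ∃ T > (0:ℝ), ∃ r > (0:ℝ), ∀ z : X, ∃ t, 0 < t ∧ t ≤ T ∧ r < dist (φ t z) z := by
  -- for each z a positive time with motion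
  have hpt : ∀ z : X, ∃ t, 0 < t ∧ 0 < dist (φ t z) z := by
    intro z
    have := hns z
    rw [IsSingular] at this
    push_neg at this
    obtain ⟨t, ht⟩ := this
    rcases lt_trichotomy t 0 with h | h | h
    · refine ⟨-t, by linarith, ?_⟩
      rw [dist_pos]
      intro hcon
      apply ht
      have := hφ.2.2 t (-t) z
      rw [hcon] at this
      simpa [hφ.2.1] using this.symm
    · exact absurd (by rw [h, hφ.2.1]) ht
    · exact ⟨t, h, by rwa [dist_pos]⟩
  choose t ht hd using hpt
  -- open cover
  set V : X → Set X := fun z => {w | dist (φ (t z) z) z / 2 < dist (φ (t z) w) w} with hV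
  have hVopen : ∀ z, IsOpen (V z) := by
    intro z
    exact isOpen_lt continuous_const ((hφ.1.comp (continuous_const.prodMk continuous_id)).dist continuous_id)
  have hcover : (univ : Set X) ⊆ ⋃ z, V z := by
    intro z _
    exact mem_iUnion.2 ⟨z, by simp only [hV, mem_setOf_eq]; linarith [hd z]⟩
  obtain ⟨F, hF⟩ := isCompact_univ.elim_finite_subcover V hVopen hcover
  rcases F.eq_empty_or_nonempty with hFe | hFn
  · -- X empty
    refine ⟨1, one_pos, 1, one_pos, fun z => ?_⟩
    exfalso
    have := hF (mem_univ z)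
    simp [hFe] at this
  · refine ⟨F.sup' hFn t, ?_, F.inf' hFn (fun z => dist (φ (t z) z) z / 2), ?_, ?_⟩
    · obtain ⟨z, hz⟩ := hFn
      exact lt_of_lt_of_le (ht z) (Finset.le_sup' t hz)
    · rw [gt_iff_lt, Finset.lt_inf'_iff]
      intro z _
      linarith [hd z]
    · intro w
      have := hF (mem_univ w)
      simp only [mem_iUnion, Finset.mem_coe] at this
      obtain ⟨z, hzF, hzw⟩ := this
      refine ⟨t z, ht z, Finset.le_sup' t hzF, lt_of_le_of_lt (Finset.inf'_le _ hzF) hzw⟩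

end Aux


section Aux2
variable {X : Type*} [MetricSpace X] [CompactSpace X] {φ : ℝ → X → X}

/-- Key distortion estimate: if the second coordinate moves little, the first moves at most T. -/
lemma distortion (hφ : IsFlow φ) {p q : X} {δ η₀ T r : ℝ}
    (hmov : ∀ (z : X) (v : ℝ), |v| ≤ η₀ → dist (φ v z) z < r / 2)
    (hTr : ∀ z : X, ∃ t, 0 < t ∧ t ≤ T ∧ r < dist (φ t z) z)
    (hδ : 2 * δ + r / 2 ≤ r) (hη₀ : 0 ≤ η₀)
    {ψ₁ ψ₂ : ℝ → ℝ} (hm1 : Monotone ψ₁) (hc1 : Continuous ψ₁) (hm2 : Monotone ψ₂)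
    (hd : ∀ σ ≥ (0:ℝ), dist (φ (ψ₁ σ) p) (φ (ψ₂ σ) q) ≤ δ) :
    ∀ τ τ', 0 ≤ τ → τ ≤ τ' → ψ₂ τ' - ψ₂ τ ≤ η₀ → ψ₁ τ' - ψ₁ τ ≤ T := by
  intro τ τ' hτ hττ' hψ₂
  by_contra hcon
  push_neg at hcon
  obtain ⟨t, ht0, htT, htr⟩ := hTr (φ (ψ₁ τ) p)
  -- find σ with ψ₁ σ = ψ₁ τ + t
  have hmem : ψ₁ τ + t ∈ Icc (ψ₁ τ) (ψ₁ τ') := ⟨by linarith, by linarith⟩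
  obtain ⟨σ, hσmem, hσ⟩ := intermediate_value_Icc hττ' hc1.continuousOn hmem
  have hσ0 : (0:ℝ) ≤ σ := le_trans hτ hσmem.1
  have e1 : φ t (φ (ψ₁ τ) p) = φ (ψ₁ σ) p := by
    rw [← hφ.2.2]; congr 1; rw [hσ]; ring
  have e2 : φ (ψ₂ σ) q = φ (ψ₂ σ - ψ₂ τ) (φ (ψ₂ τ) q) := by
    rw [← hφ.2.2, sub_add_cancel]
  have hv : |ψ₂ σ - ψ₂ τ| ≤ η₀ := by
    rw [abs_le]
    constructor
    · have := hm2 hσmem.1; linarith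
    · have := hm2 hσmem.2; linarith
  have hd2 : dist (φ (ψ₂ σ) q) (φ (ψ₂ τ) q) < r / 2 := by
    rw [e2]; exact hmov _ _ hv
  have h1 : dist (φ (ψ₁ σ) p) (φ (ψ₂ σ) q) ≤ δ := hd σ hσ0
  have h3 : dist (φ (ψ₂ τ) q) (φ (ψ₁ τ) p) ≤ δ := by
    rw [dist_comm]; exact hd τ hτ
  have := dist_triangle4 (φ (ψ₁ σ) p) (φ (ψ₂ σ) q) (φ (ψ₂ τ) q) (φ (ψ₁ τ) p)
  rw [e1] at htr
  linarith
  
lemma mono_surj_tendsto_atTop {f : ℝ → ℝ} (hm : Monotone f) (hs : Function.Surjective f) :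
    Tendsto f atTop atTop :=
  tendsto_atTop_atTop_of_monotone hm fun b => (hs b).imp fun a ha => ha.ge

lemma mono_surj_tendsto_atBot {f : ℝ → ℝ} (hm : Monotone f) (hs : Function.Surjective f) :
    Tendsto f atBot atBot :=
  tendsto_atBot_atBot_of_monotone hm fun b => (hs b).imp fun a ha => ha.le

/-- From a pair of reparameterizations with rests, extract a "diagonal" function. -/
lemma exists_diag (hφ : IsFlow φ) {x y : X} {δ : ℝ} {h₁ h₂ : ℝ → ℝ} {s : ℝ}
    (H1 : ReparamRest h₁) (H2 : ReparamRest h₂) (hs : 0 < s)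
    (hd : ∀ t ∈ Icc (0:ℝ) s, dist (φ (h₁ t) x) (φ (h₂ t) y) ≤ δ) :
    ∃ a : ℝ → ℝ, Monotone a ∧ Monotone (fun τ => τ - a τ) ∧ a 0 = 0 ∧
      ∀ τ ∈ Icc (0:ℝ) (h₁ s + h₂ s), dist (φ (a τ) x) (φ (τ - a τ) y) ≤ δ := by
  obtain ⟨hm1, hc1, hs1, h01⟩ := H1
  obtain ⟨hm2, hc2, hs2, h02⟩ := H2
  set u : ℝ → ℝ := fun t => h₁ t + h₂ t with hu
  have hum : Monotone u := hm1.add hm2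
  have huc : Continuous u := hc1.add hc2
  have husurj : Function.Surjective u := by
    apply huc.surjective
    · exact Filter.Tendsto.atTop_add_atTop (mono_surj_tendsto_atTop hm1 hs1) (mono_surj_tendsto_atTop hm2 hs2)
    · exact Filter.Tendsto.atBot_add_atBot (mono_surj_tendsto_atBot hm1 hs1) (mono_surj_tendsto_atBot hm2 hs2)
  have key : ∀ t t', u t = u t' → h₁ t = h₁ t' ∧ h₂ t = h₂ t' := by
    intro t t' htt'
    rcases le_total t t' with h | h
    · have e1 := hm1 h
      have e2 := hm2 h
      have : h₁ t + h₂ t = h₁ t' + h₂ t' := htt'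
      constructor <;> linarith
    · have e1 := hm1 h
      have e2 := hm2 h
      have : h₁ t + h₂ t = h₁ t' + h₂ t' := htt'
      constructor <;> linarith
  set a : ℝ → ℝ := fun τ => h₁ (Classical.choose (husurj τ)) with ha
  have hafact : ∀ t, a (u t) = h₁ t := by
    intro t
    exact (key _ _ (Classical.choose_spec (husurj (u t)))).1
  have hafact2 : ∀ t, u t - a (u t) = h₂ t := by
    intro t
    have := Classical.choose_spec (husurj (u t))
    have h1 := (key _ _ this).1
    simp only [ha]
    rw [h1]
    simp only [hu]
    ring
  have hrep : ∀ τ, u (Classical.choose (husurj τ)) = τ := fun τ => Classical.choose_spec (husurj τ)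
  have hamono : Monotone a := by
    intro τ τ' hττ'
    set t := Classical.choose (husurj τ)
    set t' := Classical.choose (husurj τ')
    rcases le_total t t' with h | h
    · exact hm1 h
    · have : u t' ≤ u t := hum h
      rw [hrep, hrep] at this
      have : τ = τ' := le_antisymm hττ' this
      rw [this]
  have hamono2 : Monotone (fun τ => τ - a τ) := by
    intro τ τ' hττ'
    simp only
    set t := Classical.choose (husurj τ) with htdef
    set t' := Classical.choose (husurj τ') with htdef'
    have e : τ - a τ = h₂ t := by
      conv_lhs => rw [← hrep τ]
      exact hafact2 t
    have e' : τ' - a τ' = h₂ t' := by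
      conv_lhs => rw [← hrep τ']
      exact hafact2 t'
    rw [e, e']
    rcases le_total t t' with h | h
    · exact hm2 h
    · have : u t' ≤ u t := hum h
      rw [hrep, hrep] at this
      have heq : τ = τ' := le_antisymm hττ' this
      rw [heq] at e
      rw [e] at e'
      linarith
  refine ⟨a, hamono, hamono2, ?_, ?_⟩
  · have : a (u 0) = h₁ 0 := hafact 0
    rw [show u 0 = 0 by simp [hu, h01, h02], h01] at this
    exact this
  · intro τ hτ
    have h0s : (0:ℝ) ≤ s := hs.le
    have hmem : τ ∈ Icc (u 0) (u s) := by
      rwa [show u 0 = 0 by simp [hu, h01, h02]]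
    obtain ⟨t', ht'mem, ht'⟩ := intermediate_value_Icc h0s huc.continuousOn hmem
    have e1 : a τ = h₁ t' := by rw [← ht']; exact hafact t'
    have e2 : τ - a τ = h₂ t' := by rw [← ht', hafact2]
    rw [e2, e1]
    exact hd t' ht'mem

end Aux2

/-- A flow without singular points is positive expansive iff for all `ε > 0` there is
`δ > 0` such that unboundedness of `T_δ(x,y)` forces `x` and `y` to lie in an
`ε`-orbit segment. -/
theorem posExpansive_iff_Tset_unbounded
    {X : Type*} [MetricSpace X] [CompactSpace X] (φ : ℝ → X → X)
    (hφ : IsFlow φ) (hns : ∀ x : X, ¬ IsSingular φ x) :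
    PosExpansive φ ↔
      ∀ ε > (0 : ℝ), ∃ δ > (0 : ℝ), ∀ x y : X,
        ¬ Bornology.IsBounded (Tset φ δ x y) →
        ∃ s : ℝ, |s| ≤ ε ∧ y = φ s x := by
  constructor
  · -- forward direction
    intro hP ε hε
    obtain ⟨δ₀, hδ₀, hexp⟩ := hP ε hε
    obtain ⟨T, hT, r, hr, hTr⟩ := flow_nonsing hφ hns
    obtain ⟨η₀, hη₀, hmov⟩ := flow_move hφ (show (0:ℝ) < r/2 by linarith)
    obtain ⟨γ, hγ, hmovγ⟩ := flow_move hφ (show (0:ℝ) < δ₀/8 by linarith)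
    set δ := min (δ₀/2) (r/5) with hδdef
    have hδpos : 0 < δ := lt_min (by linarith) (by linarith)
    have hδ1 : δ ≤ δ₀/2 := min_le_left _ _
    have hδ2 : δ ≤ r/5 := min_le_right _ _
    refine ⟨δ, hδpos, ?_⟩
    intro x y hub
    -- diagonal witnesses from unboundedness
    have hwit : ∀ n : ℕ, ∃ a : ℝ → ℝ, Monotone a ∧ Monotone (fun τ => τ - a τ) ∧ a 0 = 0 ∧
        ∃ L : ℝ, (n:ℝ) ≤ L ∧ ∀ τ ∈ Icc (0:ℝ) L, dist (φ (a τ) x) (φ (τ - a τ) y) ≤ δ := by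
      intro n
      have hex : ∃ p ∈ Tset φ δ x y, (n:ℝ) < dist p 0 := by
        by_contra hcon
        push_neg at hcon
        exact hub ((isBounded_closedBall (x := ((0,0):ℝ×ℝ)) (r := (n:ℝ))).subset
          (fun p hp => mem_closedBall.2 (hcon p hp)))
      obtain ⟨p, hp, hpn⟩ := hex
      obtain ⟨hp1, hp2, h₁, h₂, s, H1, H2, hs, hd, he1, he2⟩ := hp
      obtain ⟨a, ham, ham2, ha0, hdist⟩ := exists_diag hφ H1 H2 hs hd
      have hnL : (n:ℝ) ≤ h₁ s + h₂ s := by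
        have e : dist p ((0,0):ℝ×ℝ) = max |p.1| |p.2| := by
          rw [Prod.dist_eq]
          simp [Real.dist_eq]
        have hle : max |p.1| |p.2| ≤ p.1 + p.2 := by
          rw [abs_of_nonneg hp1, abs_of_nonneg hp2]
          exact max_le (by linarith) (by linarith)
        have : dist p ((0,0):ℝ×ℝ) = dist p (0:ℝ×ℝ) := rfl
        rw [he1, he2]
        rw [this] at e
        linarith
      exact ⟨a, ham, ham2, ha0, h₁ s + h₂ s, hnL, hdist⟩
    choose aa ham ham2 ha0 L hL hdist using hwit
    -- limit along an ultrafilter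
    set U : Ultrafilter ℕ := Ultrafilter.of atTop with hUdef
    have hUle : (U : Filter ℕ) ≤ atTop := Ultrafilter.of_le _
    have hbound : ∀ (n : ℕ) (τ : ℝ), aa n τ ∈ Icc (-|τ|) |τ| := by
      intro n τ
      rcases le_total 0 τ with h | h
      · have h1 : aa n 0 ≤ aa n τ := ham n h
        have h2 : (0:ℝ) - aa n 0 ≤ τ - aa n τ := ham2 n h
        rw [ha0 n] at h1 h2
        rw [abs_of_nonneg h]
        constructor <;> linarith
      · have h1 : aa n τ ≤ aa n 0 := ham n h
        have h2 : τ - aa n τ ≤ (0:ℝ) - aa n 0 := ham2 n h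
        rw [ha0 n] at h1 h2
        rw [abs_of_nonpos h]
        constructor <;> linarith
    have hlim : ∀ τ : ℝ, ∃ l, Tendsto (fun n => aa n τ) (U : Filter ℕ) (𝓝 l) := by
      intro τ
      have hle : (↑(U.map (fun n => aa n τ)) : Filter ℝ) ≤ 𝓟 (Icc (-|τ|) |τ|) := by
        rw [Ultrafilter.coe_map, le_principal_iff, mem_map]
        exact Filter.univ_mem' (fun n => hbound n τ)
      obtain ⟨l, -, hl⟩ := isCompact_Icc.ultrafilter_le_nhds (U.map fun n => aa n τ) hle
      rw [Ultrafilter.coe_map] at hl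
      exact ⟨l, hl⟩
    choose A hA using hlim
    have hAm : Monotone A := by
      intro τ τ' h
      exact le_of_tendsto_of_tendsto' (hA τ) (hA τ') (fun n => ham n h)
    have hAm2 : Monotone (fun τ => τ - A τ) := by
      intro τ τ' h
      have t1 : Tendsto (fun n => τ - aa n τ) (U : Filter ℕ) (𝓝 (τ - A τ)) :=
        tendsto_const_nhds.sub (hA τ)
      have t2 : Tendsto (fun n => τ' - aa n τ') (U : Filter ℕ) (𝓝 (τ' - A τ')) :=
        tendsto_const_nhds.sub (hA τ')
      exact le_of_tendsto_of_tendsto' t1 t2 (fun n => ham2 n h)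
    have hA0 : A 0 = 0 :=
      tendsto_nhds_unique (hA 0) (tendsto_const_nhds.congr (fun n => (ha0 n).symm))
    have hAd : ∀ τ ≥ (0:ℝ), dist (φ (A τ) x) (φ (τ - A τ) y) ≤ δ := by
      intro τ hτ
      have hev : ∀ᶠ n in (U : Filter ℕ), dist (φ (aa n τ) x) (φ (τ - aa n τ) y) ≤ δ := by
        refine hUle (eventually_atTop.2 ⟨⌈τ⌉₊, fun n hn => ?_⟩)
        refine hdist n τ ⟨hτ, ?_⟩
        calc τ ≤ (⌈τ⌉₊:ℝ) := Nat.le_ceil τ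
          _ ≤ (n:ℝ) := by exact_mod_cast hn
          _ ≤ L n := hL n
      have hcont : Continuous fun v : ℝ => dist (φ v x) (φ (τ - v) y) :=
        ((hφ.1.comp (continuous_id.prodMk continuous_const)).dist
          (hφ.1.comp ((continuous_const.sub continuous_id).prodMk continuous_const)))
      exact le_of_tendsto ((hcont.tendsto (A τ)).comp (hA τ)) hev
    have hAlip : LipschitzWith 1 A := by
      apply LipschitzWith.of_dist_le_mul
      intro τ τ'
      rw [Real.dist_eq, Real.dist_eq, NNReal.coe_one, one_mul]
      rcases le_total τ τ' with h | h
      · have h1 : A τ ≤ A τ' := hAm h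
        have h2 : τ - A τ ≤ τ' - A τ' := hAm2 h
        rw [abs_of_nonpos (by linarith), abs_of_nonpos (by linarith)]
        linarith
      · have h1 : A τ' ≤ A τ := hAm h
        have h2 : τ' - A τ' ≤ τ - A τ := hAm2 h
        rw [abs_of_nonneg (by linarith), abs_of_nonneg (by linarith)]
        linarith
    have hAc : Continuous A := hAlip.continuous
    have hδr : 2*δ + r/2 ≤ r := by linarith
    have hdis1 := distortion hφ hmov hTr hδr hη₀.le hAm hAc hAm2 hAd
    have hAd' : ∀ σ ≥ (0:ℝ), dist (φ ((fun τ => τ - A τ) σ) y) (φ (A σ) x) ≤ δ := by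
      intro σ hσ
      rw [dist_comm]
      exact hAd σ hσ
    have hAc2 : Continuous fun τ => τ - A τ := continuous_id.sub hAc
    have hdis2 := distortion hφ hmov hTr hδr hη₀.le hAm2 hAc2 hAm hAd'
    -- growth of both coordinates
    set c : ℝ := T + η₀ + 1 with hcdef
    have hcpos : 0 < c := by linarith
    have grow1 : ∀ τ ≥ (0:ℝ), η₀ < A (τ+c) - A τ := by
      intro τ hτ
      by_contra hcon
      push_neg at hcon
      have h2 : (τ + c - A (τ+c)) - (τ - A τ) ≤ T := hdis2 τ (τ+c) hτ (by linarith) hcon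
      linarith
    have grow2 : ∀ τ ≥ (0:ℝ), η₀ < (τ + c - A (τ+c)) - (τ - A τ) := by
      intro τ hτ
      by_contra hcon
      push_neg at hcon
      have h2 : A (τ+c) - A τ ≤ T := hdis1 τ (τ+c) hτ (by linarith) (by linarith)
      linarith
    have key1 : ∀ n : ℕ, (n:ℝ) * η₀ ≤ A ((n:ℝ) * c) := by
      intro n
      induction n with
      | zero => simp [hA0]
      | succ n ih =>
        have hnc : (0:ℝ) ≤ (n:ℝ)*c := by positivity
        have hg := grow1 _ hnc
        push_cast
        have e : (n:ℝ)*c + c = ((n:ℝ)+1)*c := by ring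
        rw [e] at hg
        have : ((n:ℝ)+1) * η₀ = (n:ℝ)*η₀ + η₀ := by ring
        linarith
    have key2 : ∀ n : ℕ, (n:ℝ) * η₀ ≤ (n:ℝ)*c - A ((n:ℝ) * c) := by
      intro n
      induction n with
      | zero => simp [hA0]
      | succ n ih =>
        have hnc : (0:ℝ) ≤ (n:ℝ)*c := by positivity
        have hg := grow2 _ hnc
        push_cast
        have e : (n:ℝ)*c + c = ((n:ℝ)+1)*c := by ring
        rw [e] at hg
        linarith
    have hunb : ∀ f : ℝ → ℝ, (∀ n : ℕ, (n:ℝ) * η₀ ≤ f ((n:ℝ)*c)) → Monotone f →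
        Tendsto f atTop atTop := by
      intro f hf hm
      apply tendsto_atTop_atTop_of_monotone hm
      intro b
      obtain ⟨n, hn⟩ := exists_nat_ge (b / η₀)
      refine ⟨(n:ℝ)*c, ?_⟩
      have hb : b ≤ (n:ℝ)*η₀ := by
        rw [div_le_iff₀ hη₀] at hn
        linarith
      linarith [hf n]
    have hAtop : Tendsto A atTop atTop := hunb A key1 hAm
    have hA2top : Tendsto (fun τ => τ - A τ) atTop atTop := hunb _ key2 hAm2
    -- strictified reparameterizations
    set Ab1 : ℝ → ℝ := fun τ => min (A τ) τ with hAb1def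
    set Ab2 : ℝ → ℝ := fun τ => min (τ - A τ) τ with hAb2def
    have hq1 : ∀ τ, 0 ≤ τ → Ab1 τ = A τ := by
      intro τ hτ
      apply min_eq_left
      have h2 : (0:ℝ) - A 0 ≤ τ - A τ := hAm2 hτ
      rw [hA0] at h2
      linarith
    have hq2 : ∀ τ, 0 ≤ τ → Ab2 τ = τ - A τ := by
      intro τ hτ
      apply min_eq_left
      have h1 : A 0 ≤ A τ := hAm hτ
      rw [hA0] at h1
      linarith
    have hAb1m : Monotone Ab1 := fun a b h => min_le_min (hAm h) h
    have hAb2m : Monotone Ab2 := fun a b h => min_le_min (hAm2 h) h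
    have hAb1c : Continuous Ab1 := hAc.min continuous_id
    have hAb2c : Continuous Ab2 := hAc2.min continuous_id
    have hAb1top : Tendsto Ab1 atTop atTop :=
      hAtop.congr' (((eventually_ge_atTop (0:ℝ)).mono (fun τ h => (hq1 τ h).symm)))
    have hAb2top : Tendsto Ab2 atTop atTop :=
      hA2top.congr' (((eventually_ge_atTop (0:ℝ)).mono (fun τ h => (hq2 τ h).symm)))
    have harcstrict : StrictMono fun τ : ℝ => (γ/2) * Real.arctan τ := by
      intro a b h
      have := Real.arctan_strictMono h
      have hγ2 : (0:ℝ) < γ/2 := by linarith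
      exact mul_lt_mul_of_pos_left this hγ2
    have harcbound : ∀ τ : ℝ, |(γ/2) * Real.arctan τ| ≤ γ := by
      intro τ
      rw [abs_mul]
      have h1 : |Real.arctan τ| ≤ 2 := by
        rw [abs_le]
        have h2 := Real.arctan_lt_pi_div_two τ
        have h3 := Real.neg_pi_div_two_lt_arctan τ
        have h4 := Real.pi_le_four
        constructor <;> [linarith; linarith]
      have h5 : |γ/2| = γ/2 := abs_of_pos (by linarith)
      rw [h5]
      nlinarith
    set B1 : ℝ → ℝ := fun τ => Ab1 τ + (γ/2) * Real.arctan τ with hB1def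
    set B2 : ℝ → ℝ := fun τ => Ab2 τ + (γ/2) * Real.arctan τ with hB2def
    have hB1strict : StrictMono B1 := hAb1m.add_strictMono harcstrict
    have hB2strict : StrictMono B2 := hAb2m.add_strictMono harcstrict
    have hB1c : Continuous B1 := hAb1c.add (continuous_const.mul Real.continuous_arctan)
    have hB2c : Continuous B2 := hAb2c.add (continuous_const.mul Real.continuous_arctan)
    have hBtop : ∀ (Ab : ℝ → ℝ), Tendsto Ab atTop atTop →
        Tendsto (fun τ => Ab τ + (γ/2) * Real.arctan τ) atTop atTop := by
      intro Ab hAb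
      apply tendsto_atTop_mono (g := fun τ => Ab τ + (γ/2) * Real.arctan τ)
        (f := fun τ => Ab τ + (-γ))
      · intro τ
        have := harcbound τ
        rw [abs_le] at this
        linarith [this.1]
      · exact tendsto_atTop_add_const_right atTop (-γ) hAb
    have hBbot : ∀ (Ab : ℝ → ℝ), (∀ τ, Ab τ ≤ τ) →
        Tendsto (fun τ => Ab τ + (γ/2) * Real.arctan τ) atBot atBot := by
      intro Ab hAb
      apply tendsto_atBot_mono (g := fun τ => Ab τ + (γ/2) * Real.arctan τ)
        (f := fun τ => τ + γ)
      · intro τ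
        have := harcbound τ
        rw [abs_le] at this
        have := this.2
        have h2 := hAb τ
        linarith
      · exact tendsto_atBot_add_const_right atBot γ tendsto_id
    have hB1surj : Function.Surjective B1 :=
      hB1c.surjective (hBtop Ab1 hAb1top) (hBbot Ab1 (fun τ => min_le_right _ _))
    have hB2surj : Function.Surjective B2 :=
      hB2c.surjective (hBtop Ab2 hAb2top) (hBbot Ab2 (fun τ => min_le_right _ _))
    have hB10 : B1 0 = 0 := by
      simp only [hB1def, hAb1def, hA0, Real.arctan_zero, mul_zero, add_zero, min_self]
    have hB20 : B2 0 = 0 := by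
      simp only [hB2def, hAb2def, hA0, Real.arctan_zero, mul_zero, add_zero, sub_zero, min_self]
    set e := StrictMono.orderIsoOfSurjective B2 hB2strict hB2surj with hedef
    set h : ℝ → ℝ := fun t => B1 (e.symm t) with hhdef
    have hrep : Reparam h := by
      refine ⟨hB1strict.comp e.symm.strictMono, hB1c.comp e.symm.continuous,
        hB1surj.comp e.symm.surjective, ?_⟩
      have he0 : e.symm 0 = 0 := by
        have := StrictMono.orderIsoOfSurjective_symm_apply_self B2 hB2strict hB2surj 0
        rw [hB20] at this
        exact this
      simp only [hhdef, he0, hB10]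
    have hclose : ∀ t ≥ (0:ℝ), dist (φ (h t) x) (φ t y) < δ₀ := by
      intro t ht
      set τ := e.symm t with hτdef
      have hB2τ : B2 τ = t :=
        StrictMono.orderIsoOfSurjective_self_symm_apply B2 hB2strict hB2surj t
      have hτ0 : (0:ℝ) ≤ τ := by
        by_contra hcon
        push_neg at hcon
        have := hB2strict hcon
        rw [hB2τ, hB20] at this
        linarith
      have hAb1τ : Ab1 τ = A τ := hq1 τ hτ0
      have hAb2τ : Ab2 τ = τ - A τ := hq2 τ hτ0
      have d2 : dist (φ (A τ) x) (φ (τ - A τ) y) ≤ δ := hAd τ hτ0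
      have d1 : dist (φ (B1 τ) x) (φ (A τ) x) < δ₀/8 := by
        have e1 : φ (B1 τ) x = φ ((γ/2) * Real.arctan τ) (φ (A τ) x) := by
          rw [← hφ.2.2]
          congr 1
          simp only [hB1def, hAb1τ]
          ring
        rw [e1]
        exact hmovγ _ _ (harcbound τ)
      have d3 : dist (φ (B2 τ) y) (φ (τ - A τ) y) < δ₀/8 := by
        have e3 : φ (B2 τ) y = φ ((γ/2) * Real.arctan τ) (φ (τ - A τ) y) := by
          rw [← hφ.2.2]
          congr 1
          simp only [hB2def, hAb2τ]
          ring
        rw [e3]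
        exact hmovγ _ _ (harcbound τ)
      have htri := dist_triangle4 (φ (B1 τ) x) (φ (A τ) x) (φ (τ - A τ) y) (φ (B2 τ) y)
      have hd3' : dist (φ (τ - A τ) y) (φ (B2 τ) y) < δ₀/8 := by
        rw [dist_comm]
        exact d3
      have : dist (φ (h t) x) (φ t y) = dist (φ (B1 τ) x) (φ (B2 τ) y) := by
        rw [hhdef]
        simp only
        rw [hB2τ]
      rw [this]
      linarith
    exact hexp x y h hrep hclose
  · -- backward direction
    intro hcond ε hε
    obtain ⟨δ, hδ, hc⟩ := hcond ε hε
    refine ⟨δ, hδ, ?_⟩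
    intro x y h hrep hd
    apply hc x y
    intro hb
    obtain ⟨R, hR⟩ := hb.subset_closedBall (0 : ℝ × ℝ)
    set s : ℝ := max R 0 + 1 with hsdef
    have hs : 0 < s := by positivity
    have hmem : ((h s, s) : ℝ × ℝ) ∈ Tset φ δ x y := by
      refine ⟨?_, by simp only; linarith, h, id, s,
        ⟨hrep.1.monotone, hrep.2.1, hrep.2.2.1, hrep.2.2.2⟩,
        ⟨monotone_id, continuous_id, Function.surjective_id, rfl⟩, hs, ?_, rfl, rfl⟩
      · have := hrep.1 hs
        rw [hrep.2.2.2] at this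
        exact this.le
      · intro t htm
        exact (hd t htm.1).le
    have hdle := hR hmem
    rw [mem_closedBall, Prod.dist_eq] at hdle
    have h2 : dist s (0:ℝ) ≤ R := le_trans (le_max_right _ _) hdle
    rw [Real.dist_eq, sub_zero, abs_of_pos hs] at h2
    have : R < s := by
      rw [hsdef]
      have := le_max_left R 0
      linarith
    linarith
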